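/- For all f, g ∈ D that also lie in the range of T (i.e. f = T f′ and g = T g′ for some f′, g′ ∈ D), one has the weak resolutions of the identity ⟨f, g⟩ = ∑ₙ ⟨f, cₙ⟩⟨dₙ, g⟩ and ⟨f, g⟩ = ∑ₙ ⟨f, dₙ⟩⟨cₙ, g⟩, the series converging in ℂ. In other words, (cₙ) and (dₙ) are (D ∩ range T)-quasi bases. (Proposition 2.3 (iv).) -/

import Mathlib

/-- Proposition 2.3 (iv): With `(eₙ)` an orthonormal (Hilbert)
basis contained in the subspace `D`, `T : D → H` an injective symmetric linear
map, `cₙ := T eₙ` and `dₙ ∈ D` with `T dₙ = eₙ`, the families `(cₙ)` and `(dₙ)`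
are `(D ∩ range T)`-quasi bases: for all `f, g ∈ D` lying in the range of `T`,
`⟨f, g⟩ = ∑ₙ ⟨f, cₙ⟩⟨dₙ, g⟩ = ∑ₙ ⟨f, dₙ⟩⟨cₙ, g⟩`. -/
theorem c_d_quasi_bases
    {H : Type*} [NormedAddCommGroup H] [InnerProductSpace ℂ H] [CompleteSpace H]
    (e : HilbertBasis ℕ ℂ H)
    (D : Submodule ℂ H) (he : ∀ n : ℕ, e n ∈ D)
    (T : D →ₗ[ℂ] H) (hinj : Function.Injective T)
    (hsym : ∀ f g : D, (inner ℂ (T f) (g : H) : ℂ) = inner ℂ (f : H) (T g))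
    (d : ℕ → D) (hd : ∀ n : ℕ, T (d n) = e n)
    (c : ℕ → H) (hc : ∀ n : ℕ, c n = T ⟨e n, he n⟩) :
    ∀ f g : D, (∃ f' : D, T f' = (f : H)) → (∃ g' : D, T g' = (g : H)) →
      (inner ℂ (f : H) (g : H) : ℂ)
          = ∑' n : ℕ, (inner ℂ (f : H) (c n) : ℂ) * (inner ℂ ((d n : H)) (g : H) : ℂ) ∧
      (inner ℂ (f : H) (g : H) : ℂ)
          = ∑' n : ℕ, (inner ℂ (f : H) ((d n : H)) : ℂ) * (inner ℂ (c n) (g : H) : ℂ) := by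
  intro f g ⟨f', hf'⟩ ⟨g', hg'⟩
  constructor
  · have key : ∀ n : ℕ,
        (inner ℂ (f : H) (c n) : ℂ) * (inner ℂ ((d n : H)) (g : H) : ℂ)
          = (inner ℂ (T f) (e n) : ℂ) * (inner ℂ (e n) (g' : H) : ℂ) := by
      intro n
      have h1 : (inner ℂ (f : H) (c n) : ℂ) = inner ℂ (T f) (e n) := by
        rw [hc n]
        rw [← inner_conj_symm, hsym ⟨e n, he n⟩ f, inner_conj_symm]
      have h2 : (inner ℂ ((d n : H)) (g : H) : ℂ) = inner ℂ (e n) (g' : H) := by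
        rw [← hg', ← hsym (d n) g', hd n]
      rw [h1, h2]
    rw [tsum_congr key, e.tsum_inner_mul_inner (T f) (g' : H), hsym f g', hg']
  · have key : ∀ n : ℕ,
        (inner ℂ (f : H) ((d n : H)) : ℂ) * (inner ℂ (c n) (g : H) : ℂ)
          = (inner ℂ (f' : H) (e n) : ℂ) * (inner ℂ (e n) (T g) : ℂ) := by
      intro n
      have h1 : (inner ℂ (f : H) ((d n : H)) : ℂ) = inner ℂ (f' : H) (e n) := by
        rw [← hf', hsym f' (d n), hd n]
      have h2 : (inner ℂ (c n) (g : H) : ℂ) = inner ℂ (e n) (T g) := by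
        rw [hc n, hsym ⟨e n, he n⟩ g]
      rw [h1, h2]
    rw [tsum_congr key, e.tsum_inner_mul_inner (f' : H) (T g), ← hsym f' g, hf']
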